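/- Let p ∈ ℂ[z,w] be square free and inner toral. If V = (S,T) is a k-cyclic pure p-isopair of finite bimultiplicity, then for each (λ,μ) ∈ 𝔙(p), dim(ker(S−λ)* ∩ ker(T−μ)*) ≤ k. In particular, if p has distinct irreducible factors p_1, …, p_s and V has rank α = (α_1, …, α_s), then k ≥ max{α_1, …, α_s}. -/

import Mathlib

noncomputable section

open MvPolynomial

/-- Polynomials in two variables `z, w` over `ℂ`. -/
abbrev CPoly2 : Type := MvPolynomial (Fin 2) ℂ

/-- Evaluation of a two-variable polynomial at `(z, w)`. -/
def pevalAt (p : CPoly2) (z w : ℂ) : ℂ := eval ![z, w] p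

/-- The zero set `Z(p) ⊆ ℂ²`. -/
def zeroSet (p : CPoly2) : Set (ℂ × ℂ) := {x | pevalAt p x.1 x.2 = 0}

/-- The open bidisk `𝔻²`. -/
def biDisk : Set (ℂ × ℂ) := {x | ‖x.1‖ < 1 ∧ ‖x.2‖ < 1}

/-- `𝔙(p) = Z(p) ∩ 𝔻²`. -/
def distVar (p : CPoly2) : Set (ℂ × ℂ) := zeroSet p ∩ biDisk

/-- A polynomial is inner toral if its zero set lies in `𝔻² ∪ 𝕋² ∪ 𝔼²`. -/
def InnerToral (p : CPoly2) : Prop :=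
  ∀ z w : ℂ, pevalAt p z w = 0 →
    (‖z‖ < 1 ∧ ‖w‖ < 1) ∨
    (‖z‖ = 1 ∧ ‖w‖ = 1) ∨
    (1 < ‖z‖ ∧ 1 < ‖w‖)

/-- `p` and `q` are relatively prime: no non-constant polynomial divides both. -/
def RelPrime (p q : CPoly2) : Prop :=
  ∀ d : CPoly2, d ∣ p → d ∣ q → d.totalDegree = 0

/-- `p` is square free: the square of a non-constant polynomial never divides `p`. -/
def SqFree (p : CPoly2) : Prop :=
  ∀ d : CPoly2, 0 < d.totalDegree → ¬ d * d ∣ p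

/-- `(λ, μ)` is a regular point for `p`: `p(λ,μ) = 0` and `∇p(λ,μ) ≠ 0`. -/
def IsRegularPoint (p : CPoly2) (x : ℂ × ℂ) : Prop :=
  pevalAt p x.1 x.2 = 0 ∧
    (eval ![x.1, x.2] (pderiv (0 : Fin 2) p) ≠ 0 ∨
     eval ![x.1, x.2] (pderiv (1 : Fin 2) p) ≠ 0)

/-- The one-variable polynomial `p_λ(w) = p(λ, w)`. -/
def pSlice (p : CPoly2) (lam : ℂ) : Polynomial ℂ :=
  MvPolynomial.aeval ![Polynomial.C lam, Polynomial.X] p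

section Ops

variable {H : Type*} [NormedAddCommGroup H] [NormedSpace ℂ H]

/-- For `q(z,w) = Σ c_{ij} z^i w^j`, `polyOp q S T = q(S,T) = Σ c_{ij} S^i T^j`. -/
def polyOp (q : CPoly2) (S T : H →L[ℂ] H) : H →L[ℂ] H :=
  ∑ m ∈ q.support, q.coeff m • (S ^ (m 0) * T ^ (m 1))

/-- A pure isometry: an isometry with `⋂ₙ Vⁿ(H) = {0}`. -/
def IsPureIsometry (S : H →L[ℂ] H) : Prop :=
  (∀ x : H, ‖S x‖ = ‖x‖) ∧ (⋂ n : ℕ, Set.range (⇑(S ^ (n + 1)))) = ({0} : Set H)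

/-- A pure `p`-isopair: a commuting pair of pure isometries annihilated by `p`. -/
def IsPureIsopair (p : CPoly2) (S T : H →L[ℂ] H) : Prop :=
  Commute S T ∧ IsPureIsometry S ∧ IsPureIsometry T ∧ polyOp p S T = 0

/-- The set `{Σ_j q_j(S,T) f_j : q_j ∈ ℂ[z,w]}`. -/
def cyclicSet (S T : H →L[ℂ] H) {k : ℕ} (f : Fin k → H) : Set H :=
  {x | ∃ q : Fin k → CPoly2, x = ∑ j, polyOp (q j) S T (f j)}

/-- `(S,T)` is `k`-cyclic: some `f_1, …, f_k` have `closure {Σ q_j(S,T) f_j} = H`. -/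
def IsKCyclic (S T : H →L[ℂ] H) (k : ℕ) : Prop :=
  ∃ f : Fin k → H, closure (cyclicSet S T f) = Set.univ

/-- `(S,T)` is at most nearly `k`-cyclic: some `f_1, …, f_k` have
`closure {Σ q_j(S,T) f_j}` of finite codimension in `H`. -/
def AtMostNearlyKCyclic (S T : H →L[ℂ] H) (k : ℕ) : Prop :=
  ∃ f : Fin k → H,
    FiniteDimensional ℂ (H ⧸ (Submodule.span ℂ (cyclicSet S T f)).topologicalClosure)

/-- `(S,T)` is nearly `k`-cyclic: at most nearly `k`-cyclic but not `k'` for `k' < k`. -/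
def NearlyKCyclic (S T : H →L[ℂ] H) (k : ℕ) : Prop :=
  AtMostNearlyKCyclic S T k ∧ ∀ k' < k, ¬ AtMostNearlyKCyclic S T k'

/-- Restriction of a continuous linear operator to an invariant subspace. -/
def clmRestrict (S : H →L[ℂ] H) (E : Submodule ℂ H) (h : ∀ x ∈ E, S x ∈ E) : E →L[ℂ] E :=
  { toLinearMap := (S : H →ₗ[ℂ] H).restrict h
    cont := by exact Continuous.subtype_mk (S.continuous.comp continuous_subtype_val) _ }

end Ops

/-- Unitary equivalence of pairs: a unitary `U` with `U S₁ = S₂ U` and `U T₁ = T₂ U`. -/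
def UnitarilyEquivPairs {H1 H2 : Type*} [NormedAddCommGroup H1] [NormedSpace ℂ H1]
    [NormedAddCommGroup H2] [NormedSpace ℂ H2]
    (S1 T1 : H1 →L[ℂ] H1) (S2 T2 : H2 →L[ℂ] H2) : Prop :=
  ∃ U : H1 ≃ₗᵢ[ℂ] H2, (∀ x, U (S1 x) = S2 (U x)) ∧ (∀ x, U (T1 x) = T2 (U x))

section Hilbert

variable {H : Type*} [NormedAddCommGroup H] [InnerProductSpace ℂ H] [CompleteSpace H]

/-- The multiplicity of an isometry: `dim ker V*`. -/
def multiplicity' (S : H →L[ℂ] H) : Cardinal :=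
  Module.rank ℂ (LinearMap.ker (ContinuousLinearMap.adjoint S : H →ₗ[ℂ] H))

/-- Finite bimultiplicity: both `mult S` and `mult T` are finite. -/
def FiniteBimult (S T : H →L[ℂ] H) : Prop :=
  multiplicity' S < Cardinal.aleph0 ∧ multiplicity' T < Cardinal.aleph0

/-- `dim (ker (S - λ)* ∩ ker (T - μ)*)`. -/
def jointKerDim (S T : H →L[ℂ] H) (lam mu : ℂ) : Cardinal :=
  Module.rank ℂ
    ↥(LinearMap.ker (ContinuousLinearMap.adjoint (S - lam • 1) : H →ₗ[ℂ] H) ⊓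
      LinearMap.ker (ContinuousLinearMap.adjoint (T - mu • 1) : H →ₗ[ℂ] H))

/-- `(S,T)` has rank `α`: for each `j` and every regular point `(λ,μ)` of `p` in `𝔙(p_j)`,
`dim (ker (S-λ)* ∩ ker (T-μ)*) = α_j`. -/
def HasRank (p : CPoly2) {s : ℕ} (ps : Fin s → CPoly2) (S T : H →L[ℂ] H)
    (α : Fin s → ℕ) : Prop :=
  ∀ j : Fin s, ∀ x : ℂ × ℂ, x ∈ distVar (ps j) → IsRegularPoint p x →
    jointKerDim S T x.1 x.2 = (α j : Cardinal)

/-- Rank for an isopair attached to a single irreducible polynomial. -/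
def HasRankIrred (p : CPoly2) (S T : H →L[ℂ] H) (a : ℕ) : Prop :=
  ∀ x : ℂ × ℂ, x ∈ distVar p → IsRegularPoint p x →
    jointKerDim S T x.1 x.2 = (a : Cardinal)

end Hilbert

/-- A pair of operators acting on some complex Hilbert space. -/
structure HilbertPair where
  space : Type*
  [nacg : NormedAddCommGroup space]
  [ips : InnerProductSpace ℂ space]
  [cs : CompleteSpace space]
  S : space →L[ℂ] space
  T : space →L[ℂ] space

attribute [instance] HilbertPair.nacg HilbertPair.ips HilbertPair.cs

def Theta : CPoly2 ≃ₐ[ℂ] Polynomial (Polynomial ℂ) :=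
  (MvPolynomial.finSuccEquiv ℂ 1).trans
    (Polynomial.mapAlgEquiv
      ((MvPolynomial.finSuccEquiv ℂ 0).trans
        (Polynomial.mapAlgEquiv (MvPolynomial.isEmptyAlgEquiv ℂ (Fin 0)))))

lemma Theta_C (a : ℂ) : Theta (MvPolynomial.C a) = Polynomial.C (Polynomial.C a) := by
  simp [Theta, MvPolynomial.finSuccEquiv_apply, Polynomial.map_C]
  exact MvPolynomial.coeff_zero_C a

lemma Theta_X0 : Theta (MvPolynomial.X 0) = Polynomial.X := by
  simp [Theta, MvPolynomial.finSuccEquiv_X_zero]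

lemma Theta_X1 : Theta (MvPolynomial.X 1) = Polynomial.C Polynomial.X := by
  have h1 : (MvPolynomial.X (1 : Fin 2) : CPoly2) = MvPolynomial.X ((0 : Fin 1).succ) := rfl
  rw [Theta, AlgEquiv.trans_apply, h1, MvPolynomial.finSuccEquiv_X_succ]
  simp [MvPolynomial.finSuccEquiv_X_zero]

lemma eval_Theta (f : CPoly2) (z w : ℂ) :
    pevalAt f z w =
      Polynomial.eval z (Polynomial.map (Polynomial.evalRingHom w) (Theta f)) := by
  have key : (MvPolynomial.eval ![z, w] : CPoly2 →+* ℂ) =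
      ((Polynomial.evalRingHom z).comp
        ((Polynomial.mapRingHom (Polynomial.evalRingHom w)).comp
          (Theta : CPoly2 →+* Polynomial (Polynomial ℂ)))) := by
    apply MvPolynomial.ringHom_ext
    · intro a
      simp [Theta_C]
    · intro i
      fin_cases i
      · simp [Theta_X0]
      · simp [Theta_X1]
  have := congrFun (congrArg (fun (g : CPoly2 →+* ℂ) => (g : CPoly2 → ℂ)) key) f
  simpa [pevalAt] using this

lemma Theta_pderiv (f : CPoly2) :
    Theta (pderiv (0 : Fin 2) f) = Polynomial.derivative (Theta f) := by
  induction f using MvPolynomial.induction_on with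
  | C a => rw [pderiv_C, map_zero, Theta_C, Polynomial.derivative_C]
  | add f g hf hg => simp only [map_add, hf, hg, Polynomial.derivative_add]
  | mul_X f i hf =>
    rw [pderiv_mul, map_add, map_mul, map_mul, hf,
      show Theta (f * X i) = Theta f * Theta (X i) from map_mul _ _ _,
      Polynomial.derivative_mul]
    fin_cases i
    · show Polynomial.derivative (Theta f) * Theta (X 0) + Theta f * Theta (pderiv 0 (X 0))
        = Polynomial.derivative (Theta f) * Theta (X 0)
          + Theta f * Polynomial.derivative (Theta (X 0))
      rw [pderiv_X_self, Theta_X0, map_one, Polynomial.derivative_X]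
    · show Polynomial.derivative (Theta f) * Theta (X 1) + Theta f * Theta (pderiv 0 (X 1))
        = Polynomial.derivative (Theta f) * Theta (X 1)
          + Theta f * Polynomial.derivative (Theta (X 1))
      rw [show pderiv (0 : Fin 2) (X (1 : Fin 2) : CPoly2) = 0 from pderiv_X_of_ne (by decide),
        map_zero, Theta_X1, Polynomial.derivative_C]

lemma Theta_dvd_iff {a b : CPoly2} : a ∣ b ↔ Theta a ∣ Theta b :=
  ⟨fun h => map_dvd Theta.toAlgHom h, fun h => by
    have := map_dvd Theta.symm.toAlgHom h
    simpa using this⟩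

lemma eq_C_of_totalDegree_eq_zero {q : CPoly2} (h : q.totalDegree = 0) :
    q = MvPolynomial.C (MvPolynomial.coeff 0 q) := by
  have h2 := (MvPolynomial.totalDegree_eq_zero_iff (Fin 2) q).mp h
  apply MvPolynomial.ext
  intro m
  rw [MvPolynomial.coeff_C]
  by_cases hm : m = 0
  · subst hm; simp
  · rw [if_neg (fun hc => hm hc.symm)]
    by_contra hc
    have hmem : m ∈ q.support := by rwa [MvPolynomial.mem_support_iff]
    exact hm (Finsupp.ext fun x => h2 m hmem x)

lemma isUnit_of_C {c : ℂ} (hc : c ≠ 0) : IsUnit (MvPolynomial.C c : CPoly2) :=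
  isUnit_iff_exists_inv.mpr ⟨MvPolynomial.C c⁻¹, by
    rw [← map_mul, mul_inv_cancel₀ hc, map_one]⟩

lemma totalDegree_pos_of_irreducible {q : CPoly2} (hq : Irreducible q) :
    0 < q.totalDegree := by
  by_contra hd
  push_neg at hd
  have h0 : q.totalDegree = 0 := Nat.le_zero.mp hd
  have hC := eq_C_of_totalDegree_eq_zero h0
  by_cases hc : MvPolynomial.coeff 0 q = 0
  · rw [hc, map_zero] at hC
    rw [hC] at hq
    exact not_irreducible_zero hq
  · exact hq.not_isUnit (hC ▸ isUnit_of_C hc)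

lemma exists_good_w (Bad : Set ℂ) (hB : Bad.Finite) :
    ∃ w : ℂ, ‖w‖ < 1 ∧ w ∉ Bad := by
  by_contra hcon
  push_neg at hcon
  set f : ℕ → ℂ := fun m => ((m : ℂ) + 2)⁻¹ with hfdef
  have habs : ∀ m : ℕ, ‖f m‖ < 1 := by
    intro m
    have h1 : ((m : ℂ) + 2) = ((m + 2 : ℕ) : ℂ) := by push_cast; ring
    rw [hfdef]
    simp only [norm_inv, h1, Complex.norm_natCast]
    rw [inv_lt_one_iff₀]
    right
    exact_mod_cast Nat.lt_of_lt_of_le Nat.one_lt_two (by omega)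
  have hinj : Function.Injective f := by
    intro m n hmn
    have h1 : ((m : ℂ) + 2) = ((n : ℂ) + 2) := inv_injective hmn
    have : (m : ℂ) = n := by linear_combination h1
    exact_mod_cast this
  have hsub : Set.range f ⊆ Bad := by
    rintro _ ⟨m, rfl⟩
    exact hcon (f m) (habs m)
  exact Set.infinite_range_of_injective hinj (hB.subset hsub)

lemma pevalAt_mul (a b : CPoly2) (z w : ℂ) :
    pevalAt (a * b) z w = pevalAt a z w * pevalAt b z w := by
  simp [pevalAt]

lemma natDegree_Theta_pos {p q r : CPoly2} (hp : p = q * r) (hit : InnerToral p)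
    (hq : Irreducible q) : 0 < (Theta q).natDegree := by
  by_contra hn
  push_neg at hn
  have h0 : (Theta q).natDegree = 0 := Nat.le_zero.mp hn
  set b := (Theta q).coeff 0 with hb
  have hQC : Theta q = Polynomial.C b := Polynomial.eq_C_of_natDegree_eq_zero h0
  by_cases hbdeg : 0 < b.natDegree
  · obtain ⟨w1, hw1⟩ := Complex.exists_root (Polynomial.natDegree_pos_iff_degree_pos.mp hbdeg)
    have hqz : ∀ z : ℂ, pevalAt q z w1 = 0 := by
      intro z
      rw [eval_Theta, hQC, Polynomial.map_C, Polynomial.eval_C]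
      exact hw1
    have hpz : ∀ z : ℂ, pevalAt p z w1 = 0 := by
      intro z
      rw [hp, pevalAt_mul, hqz, zero_mul]
    have h1 := hit 0 w1 (hpz 0)
    have h2 := hit 2 w1 (hpz 2)
    have hlt : ‖w1‖ < 1 := by
      rcases h1 with ⟨_, h⟩ | ⟨h, _⟩ | ⟨h, _⟩
      · exact h
      · simp at h
      · simp at h
        exact absurd h (by norm_num)
    have hgt : 1 < ‖w1‖ := by
      have habs2 : ‖(2 : ℂ)‖ = 2 := Complex.norm_two
      rcases h2 with ⟨h, _⟩ | ⟨h, _⟩ | ⟨_, h⟩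
      · rw [habs2] at h; norm_num at h
      · rw [habs2] at h; norm_num at h
      · exact h
    linarith
  · push_neg at hbdeg
    have hbC : b = Polynomial.C (b.coeff 0) :=
      Polynomial.eq_C_of_natDegree_eq_zero (Nat.le_zero.mp hbdeg)
    have hTh : Theta q = Theta (MvPolynomial.C (b.coeff 0)) := by
      rw [Theta_C, hQC]; exact congrArg Polynomial.C hbC
    have hqC : q = MvPolynomial.C (b.coeff 0) := Theta.injective hTh
    by_cases hc : b.coeff 0 = 0
    · rw [hc, map_zero] at hqC
      exact not_irreducible_zero (hqC ▸ hq)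
    · exact hq.not_isUnit (hqC ▸ isUnit_of_C hc)

set_option maxHeartbeats 1000000 in
set_option synthInstance.maxHeartbeats 400000 in
lemma exists_regular_point {p q r : CPoly2} (hp : p = q * r) (hit : InnerToral p)
    (hq : Irreducible q) (hqr : ¬ q ∣ r) :
    ∃ x : ℂ × ℂ, x ∈ distVar q ∧ IsRegularPoint p x := by
  classical
  set Q : Polynomial (Polynomial ℂ) := Theta q with hQdef
  -- basic facts about Q
  have hQirr : Irreducible Q := (MulEquiv.irreducible_iff (Theta : CPoly2 ≃ₐ[ℂ] _)).mpr hq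
  have hQnd : 0 < Q.natDegree := natDegree_Theta_pos hp hit hq
  have hQne : Q ≠ 0 := hQirr.ne_zero
  -- q does not divide its own z-derivative
  have hr0 : r ≠ 0 := fun h0 => hqr (h0 ▸ dvd_zero q)
  have hderiv_ne : Polynomial.derivative Q ≠ 0 := by
    intro h0
    have := Polynomial.natDegree_eq_zero_of_derivative_eq_zero h0
    omega
  have hqd : ¬ q ∣ pderiv (0 : Fin 2) q := by
    intro hdvd
    have h1 : Q ∣ Polynomial.derivative Q := by
      have := Theta_dvd_iff.mp hdvd
      rwa [Theta_pderiv] at this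
    have h2 := Polynomial.natDegree_le_of_dvd h1 hderiv_ne
    have h3 := Polynomial.natDegree_derivative_lt (by omega : Q.natDegree ≠ 0)
    omega
  have hqprime : Prime q := UniqueFactorizationMonoid.irreducible_iff_prime.mp hq
  -- the auxiliary polynomial h
  set hh : CPoly2 := r * pderiv (0 : Fin 2) q with hhdef
  have hq'ne : pderiv (0 : Fin 2) q ≠ 0 := by
    intro h0
    apply hderiv_ne
    rw [← Theta_pderiv, h0, map_zero]
  have hhne : hh ≠ 0 := mul_ne_zero hr0 hq'ne
  have hqh : ¬ q ∣ hh := by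
    intro hdvd
    rcases hqprime.dvd_mul.mp hdvd with h | h
    · exact hqr h
    · exact hqd h
  have hHne : Theta hh ≠ 0 := fun h0 => hhne (by
    have : Theta hh = Theta 0 := by rw [h0, map_zero]
    exact Theta.injective this)
  have hQH : ¬ Q ∣ Theta hh := fun hdvd => hqh (Theta_dvd_iff.mpr hdvd)
  -- primitivity of Q
  have hQprim : Q.IsPrimitive := by
    intro c hdvd
    have hc0 : c ≠ 0 := by
      rintro rfl
      rw [map_zero] at hdvd
      exact hQne (zero_dvd_iff.mp hdvd)
    obtain ⟨e, he⟩ := hdvd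
    have hqfact : q = Theta.symm (Polynomial.C c) * Theta.symm e := by
      apply Theta.injective
      rw [map_mul]
      simp only [AlgEquiv.apply_symm_apply]
      exact he
    rcases hq.isUnit_or_isUnit hqfact with hu | hu
    · have := hu.map Theta.toAlgHom
      simp only [AlgEquiv.coe_algHom, AlgEquiv.apply_symm_apply] at this
      exact Polynomial.isUnit_C.mp (by simpa using this)
    · exfalso
      have heu : IsUnit e := by
        have := hu.map Theta.toAlgHom
        simpa using this
      have hQdvd : Q ∣ Polynomial.C c := by
        obtain ⟨u, rfl⟩ := heu
        refine ⟨↑u⁻¹, ?_⟩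
        rw [he, mul_assoc, Units.mul_inv, mul_one]
      have hCne : Polynomial.C c ≠ 0 := fun h => hc0 (by
        rwa [Polynomial.C_eq_zero] at h)
      have := Polynomial.natDegree_le_of_dvd hQdvd hCne
      rw [Polynomial.natDegree_C] at this
      omega
  -- fraction field / Bezout argument
  have hψinj : Function.Injective (algebraMap (Polynomial ℂ) (FractionRing (Polynomial ℂ))) := IsFractionRing.injective _ _
  have hQ'irr : Irreducible (Q.map (algebraMap (Polynomial ℂ) (FractionRing (Polynomial ℂ)))) :=
    (hQprim.irreducible_iff_irreducible_map_fraction_map).mp hQirr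
  have hQ'H' : ¬ Q.map (algebraMap (Polynomial ℂ) (FractionRing (Polynomial ℂ))) ∣ (Theta hh).map (algebraMap (Polynomial ℂ) (FractionRing (Polynomial ℂ))) := by
    intro hdvd
    have hct : (Theta hh).content ≠ 0 := fun h0 => hHne (Polynomial.content_eq_zero_iff.mp h0)
    have h2 : (Theta hh).map (algebraMap (Polynomial ℂ) (FractionRing (Polynomial ℂ)))
        = Polynomial.C (algebraMap (Polynomial ℂ) (FractionRing (Polynomial ℂ)) (Theta hh).content)
          * ((Theta hh).primPart.map (algebraMap (Polynomial ℂ) (FractionRing (Polynomial ℂ)))) := by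
      rw [← Polynomial.map_C, ← Polynomial.map_mul, ← Polynomial.eq_C_content_mul_primPart]
    have hu : IsUnit (Polynomial.C (algebraMap (Polynomial ℂ) (FractionRing (Polynomial ℂ)) (Theta hh).content)) :=
      Polynomial.isUnit_C.mpr (isUnit_iff_ne_zero.mpr fun h0 =>
        hct (hψinj (by rw [h0, map_zero])))
    have hpp : Q.map (algebraMap (Polynomial ℂ) (FractionRing (Polynomial ℂ)))
        ∣ (Theta hh).primPart.map (algebraMap (Polynomial ℂ) (FractionRing (Polynomial ℂ))) := by
      rw [h2] at hdvd
      exact (IsUnit.dvd_mul_left hu).mp hdvd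
    have h3 : Q ∣ (Theta hh).primPart :=
      hQprim.dvd_of_fraction_map_dvd_fraction_map hpp
    exact hQH (h3.trans ((Theta hh).primPart_dvd))
  haveI : IsBezout (Polynomial (FractionRing (Polynomial ℂ))) :=
    @IsBezout.of_isPrincipalIdealRing _ _ (EuclideanDomain.to_principal_ideal_domain (R := Polynomial (FractionRing (Polynomial ℂ))))
  have hcop : IsCoprime (Q.map (algebraMap (Polynomial ℂ) (FractionRing (Polynomial ℂ))))
      ((Theta hh).map (algebraMap (Polynomial ℂ) (FractionRing (Polynomial ℂ)))) :=
    (hQ'irr.coprime_iff_not_dvd).mpr hQ'H'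
  obtain ⟨a, b, hab⟩ := hcop
  obtain ⟨d₁, hd₁⟩ := IsLocalization.integerNormalization_map_to_map (nonZeroDivisors (Polynomial ℂ)) a
  obtain ⟨d₂, hd₂⟩ := IsLocalization.integerNormalization_map_to_map (nonZeroDivisors (Polynomial ℂ)) b
  set U := IsLocalization.integerNormalization (nonZeroDivisors (Polynomial ℂ)) a with hUdef
  set V := IsLocalization.integerNormalization (nonZeroDivisors (Polynomial ℂ)) b with hVdef
  have hd₁' : U.map (algebraMap (Polynomial ℂ) (FractionRing (Polynomial ℂ)))
      = Polynomial.C (algebraMap (Polynomial ℂ) (FractionRing (Polynomial ℂ)) (d₁ : Polynomial ℂ)) * a := by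
    rw [hd₁, ← algebraMap_smul (FractionRing (Polynomial ℂ)) (d₁ : Polynomial ℂ) a, Polynomial.smul_eq_C_mul]
  have hd₂' : V.map (algebraMap (Polynomial ℂ) (FractionRing (Polynomial ℂ)))
      = Polynomial.C (algebraMap (Polynomial ℂ) (FractionRing (Polynomial ℂ)) (d₂ : Polynomial ℂ)) * b := by
    rw [hd₂, ← algebraMap_smul (FractionRing (Polynomial ℂ)) (d₂ : Polynomial ℂ) b, Polynomial.smul_eq_C_mul]
  have hc12 : (d₁ : Polynomial ℂ) * (d₂ : Polynomial ℂ) ≠ 0 :=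
    mul_ne_zero (mem_nonZeroDivisors_iff_ne_zero.mp d₁.2)
      (mem_nonZeroDivisors_iff_ne_zero.mp d₂.2)
  have hkey : (Polynomial.C (d₂ : Polynomial ℂ) * U) * Q
      + (Polynomial.C (d₁ : Polynomial ℂ) * V) * Theta hh
      = Polynomial.C ((d₁ : Polynomial ℂ) * (d₂ : Polynomial ℂ)) := by
    apply Polynomial.map_injective (algebraMap (Polynomial ℂ) (FractionRing (Polynomial ℂ))) hψinj
    rw [Polynomial.map_add, Polynomial.map_mul, Polynomial.map_mul, Polynomial.map_mul,
      Polynomial.map_mul, Polynomial.map_C, Polynomial.map_C, Polynomial.map_C, hd₁', hd₂']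
    rw [show (algebraMap (Polynomial ℂ) (FractionRing (Polynomial ℂ)))
        ((d₁ : Polynomial ℂ) * (d₂ : Polynomial ℂ))
        = (algebraMap (Polynomial ℂ) (FractionRing (Polynomial ℂ))) (d₁ : Polynomial ℂ)
          * (algebraMap (Polynomial ℂ) (FractionRing (Polynomial ℂ))) (d₂ : Polynomial ℂ)
      from map_mul _ _ _, Polynomial.C_mul]
    linear_combination (Polynomial.C (algebraMap (Polynomial ℂ) (FractionRing (Polynomial ℂ)) (d₁ : Polynomial ℂ))
      * Polynomial.C (algebraMap (Polynomial ℂ) (FractionRing (Polynomial ℂ)) (d₂ : Polynomial ℂ))) * hab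
  -- choose w0
  have hlc : Q.leadingCoeff ≠ 0 := Polynomial.leadingCoeff_ne_zero.mpr hQne
  obtain ⟨w0, hw0lt, hw0B⟩ := exists_good_w
    ({w | ((d₁ : Polynomial ℂ) * (d₂ : Polynomial ℂ)).IsRoot w} ∪ {w | Q.leadingCoeff.IsRoot w})
    ((Polynomial.finite_setOf_isRoot hc12).union (Polynomial.finite_setOf_isRoot hlc))
  have hcw0 : Polynomial.eval w0 ((d₁ : Polynomial ℂ) * (d₂ : Polynomial ℂ)) ≠ 0 :=
    fun h => hw0B (Or.inl h)
  have hlcw0 : (Polynomial.evalRingHom w0) Q.leadingCoeff ≠ 0 := fun h => hw0B (Or.inr h)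
  -- slice at w0 and find a root z0
  have hdeg : 0 < (Q.map (Polynomial.evalRingHom w0)).degree := by
    rw [Polynomial.degree_map_eq_of_leadingCoeff_ne_zero _ hlcw0]
    exact Polynomial.natDegree_pos_iff_degree_pos.mp hQnd
  obtain ⟨z0, hz0⟩ := Complex.exists_root hdeg
  have e1 : Polynomial.eval z0 (Q.map (Polynomial.evalRingHom w0)) = 0 := hz0
  have hqx : pevalAt q z0 w0 = 0 := by rw [eval_Theta]; exact e1
  have hpx : pevalAt p z0 w0 = 0 := by rw [hp, pevalAt_mul, hqx, zero_mul]
  have hz0lt : ‖z0‖ < 1 := by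
    rcases hit z0 w0 hpx with ⟨h, _⟩ | ⟨_, h⟩ | ⟨_, h⟩
    · exact h
    · exact absurd h (ne_of_lt hw0lt)
    · linarith
  have hhx : pevalAt hh z0 w0 ≠ 0 := by
    intro h0
    have e2 : Polynomial.eval z0 ((Theta hh).map (Polynomial.evalRingHom w0)) = 0 := by
      rw [← eval_Theta]; exact h0
    have hπ := congrArg
      (fun (g : Polynomial (Polynomial ℂ)) =>
        Polynomial.eval z0 (g.map (Polynomial.evalRingHom w0))) hkey
    simp only [Polynomial.map_add, Polynomial.map_mul, Polynomial.map_C, Polynomial.eval_add,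
      Polynomial.eval_mul, Polynomial.eval_C, e1, e2, mul_zero, add_zero, zero_add,
      Polynomial.coe_evalRingHom] at hπ
    exact hcw0 (by rw [Polynomial.eval_mul]; exact hπ.symm)
  have hreg : MvPolynomial.eval ![z0, w0] (pderiv (0 : Fin 2) p) ≠ 0 := by
    have hpd : pderiv (0 : Fin 2) p
        = pderiv (0 : Fin 2) q * r + q * pderiv (0 : Fin 2) r := by
      rw [hp, pderiv_mul]
    rw [hpd, map_add, map_mul, map_mul]
    have hq0 : MvPolynomial.eval ![z0, w0] q = 0 := hqx
    rw [hq0, zero_mul, add_zero]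
    have : pevalAt hh z0 w0
        = MvPolynomial.eval ![z0, w0] r * MvPolynomial.eval ![z0, w0] (pderiv (0 : Fin 2) q) := by
      rw [hhdef, pevalAt_mul]; rfl
    intro hcon
    apply hhx
    rw [this, mul_comm]
    exact hcon
  exact ⟨(z0, w0), ⟨hqx, hz0lt, hw0lt⟩, hpx, Or.inl hreg⟩


open scoped InnerProductSpace in
lemma part1 {H : Type*} [NormedAddCommGroup H] [InnerProductSpace ℂ H] [CompleteSpace H]
    (S T : H →L[ℂ] H) (k : ℕ) (hcyc : IsKCyclic S T k) (lam mu : ℂ) :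
    jointKerDim S T lam mu ≤ (k : Cardinal) := by
  classical
  obtain ⟨f, hf⟩ := hcyc
  set K : Submodule ℂ H :=
    LinearMap.ker (ContinuousLinearMap.adjoint (S - lam • 1) : H →ₗ[ℂ] H) ⊓
      LinearMap.ker (ContinuousLinearMap.adjoint (T - mu • 1) : H →ₗ[ℂ] H) with hK
  -- adjoint identities
  have hadjS : ContinuousLinearMap.adjoint (S - lam • 1)
      = ContinuousLinearMap.adjoint S - (starRingEnd ℂ lam) • 1 := by
    rw [← ContinuousLinearMap.star_eq_adjoint, ← ContinuousLinearMap.star_eq_adjoint,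
      star_sub, star_smul, star_one, starRingEnd_apply]
  have hadjT : ContinuousLinearMap.adjoint (T - mu • 1)
      = ContinuousLinearMap.adjoint T - (starRingEnd ℂ mu) • 1 := by
    rw [← ContinuousLinearMap.star_eq_adjoint, ← ContinuousLinearMap.star_eq_adjoint,
      star_sub, star_smul, star_one, starRingEnd_apply]
  have hSg : ∀ g ∈ K, ContinuousLinearMap.adjoint S g = (starRingEnd ℂ lam) • g := by
    intro g hg
    have h1 : ContinuousLinearMap.adjoint (S - lam • 1) g = 0 := hg.1
    rw [hadjS] at h1
    simpa [sub_eq_zero] using h1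
  have hTg : ∀ g ∈ K, ContinuousLinearMap.adjoint T g = (starRingEnd ℂ mu) • g := by
    intro g hg
    have h1 : ContinuousLinearMap.adjoint (T - mu • 1) g = 0 := hg.2
    rw [hadjT] at h1
    simpa [sub_eq_zero] using h1
  have hSpow : ∀ (a : ℕ) (g : H), g ∈ K →
      ((ContinuousLinearMap.adjoint S) ^ a) g = ((starRingEnd ℂ lam) ^ a) • g := by
    intro a
    induction a with
    | zero => intro g _; simp
    | succ n ih =>
      intro g hg
      rw [pow_succ']
      calc (ContinuousLinearMap.adjoint S * (ContinuousLinearMap.adjoint S) ^ n) g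
          = ContinuousLinearMap.adjoint S (((ContinuousLinearMap.adjoint S) ^ n) g) := rfl
        _ = ContinuousLinearMap.adjoint S (((starRingEnd ℂ lam) ^ n) • g) := by rw [ih g hg]
        _ = ((starRingEnd ℂ lam) ^ n) • (ContinuousLinearMap.adjoint S g) := by
            rw [map_smul]
        _ = ((starRingEnd ℂ lam) ^ (n+1)) • g := by
            rw [hSg g hg, smul_smul, pow_succ]
  have hTpow : ∀ (b : ℕ) (g : H), g ∈ K →
      ((ContinuousLinearMap.adjoint T) ^ b) g = ((starRingEnd ℂ mu) ^ b) • g := by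
    intro b
    induction b with
    | zero => intro g _; simp
    | succ n ih =>
      intro g hg
      rw [pow_succ']
      calc (ContinuousLinearMap.adjoint T * (ContinuousLinearMap.adjoint T) ^ n) g
          = ContinuousLinearMap.adjoint T (((ContinuousLinearMap.adjoint T) ^ n) g) := rfl
        _ = ContinuousLinearMap.adjoint T (((starRingEnd ℂ mu) ^ n) • g) := by rw [ih g hg]
        _ = ((starRingEnd ℂ mu) ^ n) • (ContinuousLinearMap.adjoint T g) := by rw [map_smul]
        _ = ((starRingEnd ℂ mu) ^ (n+1)) • g := by rw [hTg g hg, smul_smul, pow_succ]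
  -- adjoint of monomials on K
  have hmono : ∀ (a b : ℕ) (u g : H), g ∈ K →
      ⟪(S ^ a * T ^ b) u, g⟫_ℂ
        = ((starRingEnd ℂ lam) ^ a * (starRingEnd ℂ mu) ^ b) * ⟪u, g⟫_ℂ := by
    intro a b u g hg
    have h1 : ⟪(S ^ a * T ^ b) u, g⟫_ℂ
        = ⟪u, (ContinuousLinearMap.adjoint (S ^ a * T ^ b)) g⟫_ℂ :=
      (ContinuousLinearMap.adjoint_inner_right _ u g).symm
    have h2 : ContinuousLinearMap.adjoint (S ^ a * T ^ b)
        = (ContinuousLinearMap.adjoint T) ^ b * (ContinuousLinearMap.adjoint S) ^ a := by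
      rw [← ContinuousLinearMap.star_eq_adjoint, star_mul, star_pow, star_pow,
        ContinuousLinearMap.star_eq_adjoint, ContinuousLinearMap.star_eq_adjoint]
    have h3 : (ContinuousLinearMap.adjoint (S ^ a * T ^ b)) g
        = ((starRingEnd ℂ lam) ^ a * (starRingEnd ℂ mu) ^ b) • g := by
      rw [h2]
      calc ((ContinuousLinearMap.adjoint T) ^ b * (ContinuousLinearMap.adjoint S) ^ a) g
          = ((ContinuousLinearMap.adjoint T) ^ b) (((ContinuousLinearMap.adjoint S) ^ a) g) := rfl
        _ = ((ContinuousLinearMap.adjoint T) ^ b) (((starRingEnd ℂ lam) ^ a) • g) := by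
            rw [hSpow a g hg]
        _ = ((starRingEnd ℂ lam) ^ a) • (((ContinuousLinearMap.adjoint T) ^ b) g) := by
            rw [map_smul]
        _ = ((starRingEnd ℂ lam) ^ a * (starRingEnd ℂ mu) ^ b) • g := by
            rw [hTpow b g hg, smul_smul]
    rw [h1, h3, inner_smul_right]
  -- the main computation for polyOp
  have hpoly : ∀ (q : CPoly2) (u g : H), g ∈ K →
      ⟪(polyOp q S T) u, g⟫_ℂ = (starRingEnd ℂ (pevalAt q lam mu)) * ⟪u, g⟫_ℂ := by
    intro q u g hg
    have h1 : (polyOp q S T) u = ∑ m ∈ q.support, q.coeff m • ((S ^ (m 0) * T ^ (m 1)) u) := by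
      rw [polyOp, ContinuousLinearMap.sum_apply]
      exact Finset.sum_congr rfl fun m _ => rfl
    rw [h1, sum_inner]
    have h2 : pevalAt q lam mu = ∑ m ∈ q.support, q.coeff m * (lam ^ (m 0) * mu ^ (m 1)) := by
      rw [pevalAt, eval_eq']
      refine Finset.sum_congr rfl fun m _ => ?_
      congr 1
      rw [Fin.prod_univ_two]
      simp
    rw [h2, map_sum, Finset.sum_mul]
    refine Finset.sum_congr rfl fun m _ => ?_
    rw [inner_smul_left, hmono (m 0) (m 1) u g hg]
    simp only [map_mul, map_pow]
    ring
  -- the injection into ℂ^k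
  let L : ↥K →ₗ[ℂ] (Fin k → ℂ) :=
    { toFun := fun g j => ⟪f j, (g : H)⟫_ℂ
      map_add' := by intro g₁ g₂; funext j; simp [inner_add_right]
      map_smul' := by intro c g; funext j; simp [inner_smul_right] }
  have hLinj : Function.Injective L := by
    rw [injective_iff_map_eq_zero]
    intro g hLg
    have hj : ∀ j, ⟪f j, (g : H)⟫_ℂ = 0 := fun j => congrFun hLg j
    have hy : ∀ y ∈ cyclicSet S T f, ⟪y, (g : H)⟫_ℂ = 0 := by
      rintro y ⟨qs, rfl⟩
      rw [sum_inner]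
      refine Finset.sum_eq_zero fun j _ => ?_
      rw [hpoly (qs j) (f j) g g.2, hj j, mul_zero]
    have hclosed : IsClosed {y : H | ⟪y, (g : H)⟫_ℂ = 0} :=
      isClosed_eq (Continuous.inner continuous_id continuous_const) continuous_const
    have hsub : closure (cyclicSet S T f) ⊆ {y : H | ⟪y, (g : H)⟫_ℂ = 0} :=
      closure_minimal hy hclosed
    have hg0 : ⟪(g : H), (g : H)⟫_ℂ = 0 := by
      have : (g : H) ∈ closure (cyclicSet S T f) := by rw [hf]; trivial
      exact hsub this
    have : (g : H) = 0 := inner_self_eq_zero.mp hg0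
    exact Subtype.ext this
  have hrank := LinearMap.lift_rank_le_of_injective L hLinj
  rw [rank_fin_fun, Cardinal.lift_natCast] at hrank
  have : jointKerDim S T lam mu = Module.rank ℂ ↥K := rfl
  rw [this]
  exact_mod_cast (Cardinal.lift_le_nat_iff).mp hrank

/-- for a `k`-cyclic pure `p`-isopair of finite bimultiplicity,
`dim (ker (S-λ)* ∩ ker (T-μ)*) ≤ k` on `𝔙(p)`; in particular `k ≥ max α` whenever
`V` has rank `α`. -/
theorem statement14 {H : Type*} [NormedAddCommGroup H] [InnerProductSpace ℂ H]
    [CompleteSpace H] {s : ℕ} (p : CPoly2) (ps : Fin s → CPoly2)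
    (hsf : SqFree p) (hit : InnerToral p)
    (hirr : ∀ j, Irreducible (ps j)) (hprod : p = ∏ j, ps j)
    (hdist : ∀ i j : Fin s, i ≠ j → ps i ≠ ps j)
    (S T : H →L[ℂ] H) (k : ℕ)
    (hV : IsPureIsopair p S T) (hfin : FiniteBimult S T) (hcyc : IsKCyclic S T k) :
    (∀ x ∈ distVar p, jointKerDim S T x.1 x.2 ≤ (k : Cardinal)) ∧
    (∀ α : Fin s → ℕ, HasRank p ps S T α → ∀ j, α j ≤ k) := by
  constructor
  · intro x _
    exact part1 S T k hcyc x.1 x.2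
  · intro α hα j
    have hp : p = ps j * ∏ i ∈ Finset.univ.erase j, ps i := by
      rw [hprod, ← Finset.mul_prod_erase _ _ (Finset.mem_univ j)]
    have hqr : ¬ ps j ∣ ∏ i ∈ Finset.univ.erase j, ps i := by
      intro hdvd
      obtain ⟨e, he⟩ := hdvd
      apply hsf (ps j) (totalDegree_pos_of_irreducible (hirr j))
      exact ⟨e, by rw [hp, he]; ring⟩
    obtain ⟨x, hxq, hxreg⟩ := exists_regular_point hp hit (hirr j) hqr
    have h1 : jointKerDim S T x.1 x.2 ≤ (k : Cardinal) := part1 S T k hcyc x.1 x.2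
    have h2 := hα j x hxq hxreg
    rw [h2] at h1
    exact_mod_cast h1
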